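/- Let Λ = ℤ[t^{±1}], let p ∈ Λ be a polynomial with |p(1)| = 1, and let n ≥ 1. Then the abelian group Λ/(p(t), t^n − 1) is finite if and only if p(ζ) ≠ 0 for every n-th root of unity ζ, and in that case its order equals |∏_{j=0}^{n-1} p(e^{2πij/n})|. -/

import Mathlib

open LaurentPolynomial

/-- Evaluation of an integral Laurent polynomial at a nonzero complex number `z`, as the
ring homomorphism `ℤ[t,t⁻¹] → ℂ` sending `tⁿ ↦ zⁿ`. -/
noncomputable def laurentEval (z : ℂˣ) : LaurentPolynomial ℤ →ₐ[ℤ] ℂ :=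
  AddMonoidAlgebra.lift ℤ ℂ ℤ ((Units.coeHom ℂ).comp (zpowersHom ℂˣ z))

open Polynomial Submodule

section Helpers

/-- Cokernel cardinality of an injective endomorphism of a finite free `ℤ`-module. -/
theorem natCard_quotient_range_eq_natAbs_det {ι M : Type*} [Fintype ι]
    [AddCommGroup M] (b : Module.Basis ι ℤ M) (f : M →ₗ[ℤ] M)
    (hf : LinearMap.det f ≠ 0) :
    Nat.card (M ⧸ LinearMap.range f) = (LinearMap.det f).natAbs := by
  classical
  have hinj : Function.Injective f := by
    have hdet : (LinearMap.toMatrix b b f).det ≠ 0 := by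
      rwa [LinearMap.det_toMatrix]
    rw [injective_iff_map_eq_zero]
    intro x hx
    have h1 : (LinearMap.toMatrix b b f).mulVec (b.repr x) = b.repr (f x) :=
      LinearMap.toMatrix_mulVec_repr b b f x
    rw [hx] at h1
    have h2 : (⇑(b.repr x) : ι → ℤ) = 0 := by
      apply Matrix.eq_zero_of_mulVec_eq_zero hdet
      rw [h1]; simp
    have h3 : b.repr x = 0 := by
      ext i; exact congrFun h2 i
    simpa using congrArg b.repr.symm h3
  set N := LinearMap.range f with hN
  obtain ⟨m, snf⟩ := N.smithNormalForm b
  set B := snf.bM with hB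
  let e0 := LinearEquiv.ofInjective f hinj
  have hcard : Fintype.card ι = m := by
    have e1 : Fin m ≃ ι := snf.bN.indexEquiv (B.map e0)
    simpa using (Fintype.card_congr e1).symm
  have hbij : Function.Bijective snf.f :=
    (Fintype.bijective_iff_injective_and_card snf.f).mpr ⟨snf.f.injective, by simp [hcard]⟩
  let σ : Fin m ≃ ι := Equiv.ofBijective snf.f hbij
  let bN' := snf.bN.reindex σ
  let a' : ι → ℤ := fun i => snf.a (σ.symm i)
  have hbN' : ∀ i, (bN' i : M) = a' i • B i := by
    intro i
    have h := snf.snf (σ.symm i)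
    simp only [bN', Module.Basis.reindex_apply]
    rw [h]
    have : snf.f (σ.symm i) = i := σ.apply_symm_apply i
    rw [this]
  -- determinant part
  have hdet : (LinearMap.det f).natAbs = (∏ i, a' i).natAbs := by
    let e2 := B.equiv bN' (Equiv.refl ι)
    let g := N.subtype ∘ₗ (e2 : M →ₗ[ℤ] N)
    have hfeq : f = N.subtype ∘ₗ (e0 : M →ₗ[ℤ] N) := by
      ext x; rfl
    have hassoc : Associated (LinearMap.det f) (LinearMap.det g) := by
      rw [hfeq]
      exact LinearMap.associated_det_comp_equiv _ _ _
    have hg : ∀ i, g (B i) = a' i • B i := by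
      intro i
      simp only [g, LinearMap.comp_apply, LinearEquiv.coe_coe, e2, Module.Basis.equiv_apply,
        Equiv.refl_apply]
      exact hbN' i
    have hmat : LinearMap.toMatrix B B g = Matrix.diagonal a' := by
      ext i j
      rw [LinearMap.toMatrix_apply, hg, map_smul, Module.Basis.repr_self, Finsupp.smul_single,
        smul_eq_mul, mul_one]
      by_cases h : i = j
      · rw [h, Matrix.diagonal_apply_eq, Finsupp.single_eq_same]
      · rw [Matrix.diagonal_apply_ne _ h, Finsupp.single_eq_of_ne h]
    have hdetg : LinearMap.det g = ∏ i, a' i := by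
      rw [← LinearMap.det_toMatrix B, hmat, Matrix.det_diagonal]
    rw [← hdetg]
    exact Int.natAbs_eq_iff_associated.mpr hassoc
  -- quotient part
  have mem_N_iff : ∀ x, x ∈ N ↔ ∀ i, a' i ∣ B.repr x i := by
    intro x
    rw [bN'.mem_submodule_iff']
    simp_rw [hbN']
    have key : ∀ (c : ι → ℤ) (i), B.repr (∑ j, c j • a' j • B j) i = a' i * c i := by
      intro c i
      simp only [← mul_smul]
      rw [B.repr_sum_self]
      exact mul_comm _ _
    constructor
    · rintro ⟨c, rfl⟩ i
      exact ⟨c i, key c i⟩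
    · intro ha
      choose c hc using ha
      exact ⟨c, B.ext_elem fun i => (hc i).trans (key c i).symm⟩
  let I' : Submodule ℤ (ι → ℤ) := Submodule.pi Set.univ fun i => Ideal.span {a' i}
  have hmap : N.map (B.equivFun : M →ₗ[ℤ] (ι → ℤ)) = I' := by
    ext x
    simp only [I', Submodule.mem_map, Submodule.mem_pi, Ideal.mem_span_singleton, Set.mem_univ,
      forall_true_left, LinearEquiv.coe_coe, Module.Basis.equivFun_apply]
    constructor
    · rintro ⟨y, hy, rfl⟩ i
      exact (mem_N_iff y).mp hy i
    · intro hdvd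
      refine ⟨∑ i, x i • B i, ?_, ?_⟩
      · rw [mem_N_iff]
        intro i
        rw [B.repr_sum_self]
        exact hdvd i
      · ext i
        rw [B.repr_sum_self]
  let e3 := Submodule.Quotient.equiv N I' B.equivFun hmap
  let e4 := Submodule.quotientPi (fun i => (Ideal.span {a' i} : Submodule ℤ ℤ))
  have he4 : ((ι → ℤ) ⧸ I') ≃ₗ[ℤ] ∀ i, ℤ ⧸ Ideal.span ({a' i} : Set ℤ) := e4
  calc Nat.card (M ⧸ N) = Nat.card (∀ i, ℤ ⧸ Ideal.span ({a' i} : Set ℤ)) :=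
        Nat.card_congr (e3.toEquiv.trans he4.toEquiv)
    _ = ∏ i, Nat.card (ℤ ⧸ Ideal.span ({a' i} : Set ℤ)) := Nat.card_pi
    _ = ∏ i, (a' i).natAbs := by
        refine Finset.prod_congr rfl fun i _ => ?_
        rw [Nat.card_congr (Int.quotientSpanEquivZMod (a' i)).toEquiv, Nat.card_zmod]
    _ = (∏ i, a' i).natAbs := (map_prod Int.natAbsHom a' Finset.univ).symm
    _ = (LinearMap.det f).natAbs := hdet.symm

/-- Generic evaluation of integral Laurent polynomials at a unit of a commutative ring. -/
noncomputable def uEval {R : Type*} [CommRing R] (z : Rˣ) : LaurentPolynomial ℤ →ₐ[ℤ] R :=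
  AddMonoidAlgebra.lift ℤ R ℤ ((Units.coeHom R).comp (zpowersHom Rˣ z))

lemma laurentEval_eq_uEval (z : ℂˣ) : laurentEval z = uEval z := rfl

lemma uEval_T {R : Type*} [CommRing R] (z : Rˣ) (k : ℤ) : uEval z (T k) = ↑(z ^ k) := by
  have h : (T k : LaurentPolynomial ℤ) = AddMonoidAlgebra.single k 1 := rfl
  rw [uEval, h, AddMonoidAlgebra.lift_single, one_smul]
  rfl

lemma uEval_ext {R : Type*} [CommRing R] {F G : LaurentPolynomial ℤ →ₐ[ℤ] R}
    (h : ∀ k : ℤ, F (T k) = G (T k)) : F = G :=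
  AddMonoidAlgebra.algHom_ext h (Subsingleton.elim _ _)

lemma root_pow_eq_one (n : ℕ) : (AdjoinRoot.root ((X : ℤ[X]) ^ n - 1)) ^ n = 1 := by
  have h0 : AdjoinRoot.mk ((X : ℤ[X]) ^ n - 1) ((X : ℤ[X]) ^ n - 1) = 0 := AdjoinRoot.mk_self
  have h1 : (AdjoinRoot.root ((X : ℤ[X]) ^ n - 1)) ^ n - 1 = 0 := by
    simpa [map_sub, map_pow, AdjoinRoot.mk_X] using h0
  exact sub_eq_zero.mp h1

/-- The root of `Xⁿ - 1` in `AdjoinRoot` as a unit. -/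
noncomputable def uroot (n : ℕ) (hn : 1 ≤ n) : (AdjoinRoot ((X : ℤ[X]) ^ n - 1))ˣ :=
  (IsUnit.of_mul_eq_one (a := AdjoinRoot.root _) (AdjoinRoot.root _ ^ (n - 1)) (by
    rw [← pow_succ']
    have h : n - 1 + 1 = n := by omega
    rw [h]
    exact root_pow_eq_one n)).unit

lemma uroot_val (n : ℕ) (hn : 1 ≤ n) : (uroot n hn : AdjoinRoot ((X : ℤ[X]) ^ n - 1))
    = AdjoinRoot.root _ := rfl

/-- The evaluation `ℤ[t,t⁻¹] → ℤ[X]/(Xⁿ-1)` sending `t` to the root. -/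
noncomputable def phi (n : ℕ) (hn : 1 ≤ n) :
    LaurentPolynomial ℤ →ₐ[ℤ] AdjoinRoot ((X : ℤ[X]) ^ n - 1) :=
  uEval (uroot n hn)

lemma phi_T (n : ℕ) (hn : 1 ≤ n) (k : ℤ) : phi n hn (T k) = ↑(uroot n hn ^ k) := uEval_T _ _

lemma phi_toLaurent (n : ℕ) (hn : 1 ≤ n) (g : ℤ[X]) :
    phi n hn (toLaurent g) = AdjoinRoot.mk _ g := by
  have h : (phi n hn).comp (toLaurentAlg : ℤ[X] →ₐ[ℤ] LaurentPolynomial ℤ)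
      = (AdjoinRoot.mk ((X : ℤ[X]) ^ n - 1)).toIntAlgHom := by
    apply Polynomial.algHom_ext
    have h1 : (toLaurentAlg : ℤ[X] →ₐ[ℤ] LaurentPolynomial ℤ) X = T 1 := by
      simp [toLaurentAlg_apply, Polynomial.toLaurent_X]
    rw [AlgHom.comp_apply, h1, phi_T]
    show _ = AdjoinRoot.mk ((X : ℤ[X]) ^ n - 1) X
    rw [AdjoinRoot.mk_X, zpow_one, uroot_val]
  have := DFunLike.congr_fun h g
  simp only [AlgHom.comp_apply, toLaurentAlg_apply] at this
  exact this

lemma phi_surjective (n : ℕ) (hn : 1 ≤ n) : Function.Surjective (phi n hn) := by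
  intro y
  have hmem : AdjoinRoot.root ((X : ℤ[X]) ^ n - 1) ∈ (phi n hn).range := by
    refine ⟨T 1, ?_⟩
    show phi n hn (T 1) = _
    rw [phi_T, zpow_one, uroot_val]
  have htop : (phi n hn).range = ⊤ := by
    rw [← top_le_iff, ← AdjoinRoot.adjoinRoot_eq_top]
    exact Algebra.adjoin_le (Set.singleton_subset_iff.mpr hmem)
  have : y ∈ (phi n hn).range := htop ▸ Algebra.mem_top
  exact this

lemma toLaurent_q (n : ℕ) : toLaurent ((X : ℤ[X]) ^ n - 1) = T (n : ℤ) - 1 := by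
  rw [map_sub, Polynomial.toLaurent_X_pow, map_one]

lemma phi_ker (n : ℕ) (hn : 1 ≤ n) :
    RingHom.ker (phi n hn) = Ideal.span {T (n : ℤ) - 1} := by
  apply le_antisymm
  · intro f hf
    rw [RingHom.mem_ker] at hf
    obtain ⟨m, f', hf'⟩ := LaurentPolynomial.exists_T_pow f
    have h2 : AdjoinRoot.mk ((X : ℤ[X]) ^ n - 1) f' = 0 := by
      rw [← phi_toLaurent n hn, hf', map_mul, hf, zero_mul]
    rw [AdjoinRoot.mk_eq_zero] at h2
    obtain ⟨h, hh⟩ := h2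
    have hfT : f = toLaurent f' * T (-(m : ℤ)) := by
      rw [hf', mul_assoc, ← T_add]
      simp
    rw [hfT, hh, map_mul, toLaurent_q]
    rw [Ideal.mem_span_singleton]
    exact ⟨toLaurent h * T (-(m : ℤ)), by ring⟩
  · rw [Ideal.span_le, Set.singleton_subset_iff]
    have hval : phi n hn (T (n : ℤ) - 1) = 0 := by
      rw [map_sub, map_one, phi_T]
      have h1 : uroot n hn ^ (n : ℤ) = 1 := by
        rw [zpow_natCast]
        ext
        rw [Units.val_pow_eq_pow_val, uroot_val]
        exact root_pow_eq_one n
      rw [h1, Units.val_one, sub_self]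
    exact RingHom.mem_ker.mpr hval

/-- The quotient `ℤ[t,t⁻¹]/(p, tⁿ-1)` is isomorphic to `(ℤ[X]/(Xⁿ-1))/(φ p)`. -/
noncomputable def quotEquiv (n : ℕ) (hn : 1 ≤ n) (p : LaurentPolynomial ℤ) :
    (LaurentPolynomial ℤ ⧸ Ideal.span {p, T (n : ℤ) - 1}) ≃+*
      (AdjoinRoot ((X : ℤ[X]) ^ n - 1) ⧸ Ideal.span {phi n hn p}) := by
  let π : LaurentPolynomial ℤ →+* (AdjoinRoot ((X : ℤ[X]) ^ n - 1) ⧸ Ideal.span {phi n hn p}) :=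
    (Ideal.Quotient.mk _).comp (phi n hn : LaurentPolynomial ℤ →+* _)
  have hπsurj : Function.Surjective π :=
    Ideal.Quotient.mk_surjective.comp (phi_surjective n hn)
  have hπker : RingHom.ker π = Ideal.span {p, T (n : ℤ) - 1} := by
    have h1 : RingHom.ker π = Ideal.comap (phi n hn) (Ideal.span {phi n hn p}) := by
      have := RingHom.comap_ker (Ideal.Quotient.mk (Ideal.span {phi n hn p}))
        (phi n hn : LaurentPolynomial ℤ →+* _)
      rw [Ideal.mk_ker] at this
      exact this.symm
    rw [h1]
    have h2 : Ideal.span {phi n hn p} = Ideal.map (phi n hn) (Ideal.span {p}) := by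
      rw [Ideal.map_span]
      simp
    rw [h2, Ideal.comap_map_of_surjective (phi n hn) (phi_surjective n hn)]
    have h3 : Ideal.comap (phi n hn) (⊥ : Ideal (AdjoinRoot ((X : ℤ[X]) ^ n - 1)))
        = RingHom.ker (phi n hn) := rfl
    rw [h3, phi_ker n hn, Ideal.span_insert]
  exact (Ideal.quotEquivOfEq hπker.symm).trans (RingHom.quotientKerEquivOfSurjective hπsurj)

lemma uEval_factor {R R' : Type*} [CommRing R] [CommRing R'] (ψ : R →+* R') (u : Rˣ) (z : R'ˣ)
    (hz : ψ ↑u = ↑z) (f : LaurentPolynomial ℤ) :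
    uEval z f = ψ (uEval u f) := by
  have hmapu : Units.map (ψ : R →* R') u = z := Units.ext (by rwa [Units.coe_map])
  have hcomp : (ψ.toIntAlgHom).comp (uEval u) = uEval z := by
    apply uEval_ext
    intro k
    rw [AlgHom.comp_apply, uEval_T, uEval_T]
    show ψ ↑(u ^ k) = ↑(z ^ k)
    calc ψ ↑(u ^ k) = ↑(Units.map (ψ : R →* R') (u ^ k)) := (Units.coe_map _ _).symm
      _ = ↑((Units.map (ψ : R →* R') u) ^ k) := by rw [map_zpow]
      _ = ↑(z ^ k) := by rw [hmapu]
  exact (DFunLike.congr_fun hcomp f).symm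

lemma det_cast_eq_prod {n : ℕ} (dval : Fin n → ℂ) (A : Matrix (Fin n) (Fin n) ℤ) (v : Fin n → ℂ)
    (hinj : Function.Injective v)
    (h : ∀ j k, ∑ i, ((Int.castRingHom ℂ) (A i k)) * v j ^ (i : ℕ) = dval j * v j ^ (k : ℕ)) :
    ((A.det : ℤ) : ℂ) = ∏ j, dval j := by
  have hVA : (Matrix.vandermonde v) * (A.map (Int.castRingHom ℂ)) =
      Matrix.diagonal dval * Matrix.vandermonde v := by
    ext j k
    rw [Matrix.mul_apply, Matrix.diagonal_mul]
    simp only [Matrix.vandermonde_apply, Matrix.map_apply]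
    rw [← h j k]
    exact Finset.sum_congr rfl fun i _ => mul_comm _ _
  have hdet := congrArg Matrix.det hVA
  rw [Matrix.det_mul, Matrix.det_mul, Matrix.det_diagonal] at hdet
  have hV : (Matrix.vandermonde v).det ≠ 0 := Matrix.det_vandermonde_ne_zero_iff.mpr hinj
  have h2 : (A.map (Int.castRingHom ℂ)).det = ∏ j, dval j := by
    refine mul_right_cancel₀ hV ?_
    rw [mul_comm] at hdet
    exact hdet
  rw [← h2, ← RingHom.mapMatrix_apply, ← RingHom.map_det]
  rfl

noncomputable def vz (n : ℕ) (j : ℕ) : ℂ := Complex.exp (2 * Real.pi * Complex.I * j / n)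

lemma vz_eq_pow (n j : ℕ) : vz n j = Complex.exp (2 * Real.pi * Complex.I / n) ^ j := by
  rw [vz, ← Complex.exp_nat_mul]
  congr 1
  ring

lemma vz_pow (n : ℕ) (hn0 : n ≠ 0) (j : ℕ) : vz n j ^ n = 1 := by
  rw [vz_eq_pow, ← pow_mul, mul_comm j n, pow_mul,
    (Complex.isPrimitiveRoot_exp n hn0).pow_eq_one, one_pow]

lemma vz_inj (n : ℕ) (hn0 : n ≠ 0) :
    Function.Injective (fun j : Fin n => vz n (j : ℕ)) := by
  intro i j hij
  simp only [vz_eq_pow] at hij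
  exact Fin.ext ((Complex.isPrimitiveRoot_exp n hn0).pow_inj i.isLt j.isLt hij)

end Helpers

set_option maxHeartbeats 2000000 in
/-- Fox formula. -/
theorem fox_formula (p : LaurentPolynomial ℤ) (n : ℕ) (hn : 1 ≤ n)
    (hp1 : ‖laurentEval 1 p‖ = 1) :
    (Finite (LaurentPolynomial ℤ ⧸ Ideal.span {p, T (n : ℤ) - 1}) ↔
      ∀ z : ℂˣ, (z : ℂ) ^ n = 1 → laurentEval z p ≠ 0) ∧
    ((∀ z : ℂˣ, (z : ℂ) ^ n = 1 → laurentEval z p ≠ 0) →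
      (Nat.card (LaurentPolynomial ℤ ⧸ Ideal.span {p, T (n : ℤ) - 1}) : ℝ) =
        ‖∏ j ∈ Finset.range n,
          laurentEval (Units.mk0 (Complex.exp (2 * Real.pi * Complex.I * j / n))
            (Complex.exp_ne_zero _)) p‖) := by
  classical
  have hn0 : n ≠ 0 := by omega
  have hq : ((X : ℤ[X]) ^ n - 1).Monic := by
    have h := Polynomial.monic_X_pow_sub_C (1 : ℤ) hn0
    rwa [Polynomial.C_1] at h
  set S := AdjoinRoot ((X : ℤ[X]) ^ n - 1) with hS
  set P : S := phi n hn p with hP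
  let E := quotEquiv n hn p
  -- power basis
  let pb := AdjoinRoot.powerBasis' hq
  have hdim : pb.dim = n := by
    rw [AdjoinRoot.powerBasis'_dim]
    have h : ((X : ℤ[X]) ^ n - 1) = X ^ n - Polynomial.C 1 := by rw [Polynomial.C_1]
    rw [h, Polynomial.natDegree_X_pow_sub_C]
  let bS : Module.Basis (Fin n) ℤ S := pb.basis.reindex (finCongr hdim)
  have hbS : ∀ i : Fin n, bS i = AdjoinRoot.root ((X : ℤ[X]) ^ n - 1) ^ (i : ℕ) := by
    intro i
    simp only [bS, Module.Basis.reindex_apply, PowerBasis.basis_eq_pow, AdjoinRoot.powerBasis'_gen]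
    congr 1
  -- the complex roots of unity
  let v : Fin n → ℂ := fun j => vz n (j : ℕ)
  let zu : Fin n → ℂˣ := fun j => Units.mk0 (v j) (Complex.exp_ne_zero _)
  have hvinj : Function.Injective v := vz_inj n hn0
  have hvpow : ∀ j : Fin n, v j ^ n = 1 := fun j => vz_pow n hn0 (j : ℕ)
  have hz_eval : ∀ z : ℂˣ, (z : ℂ) ^ n = 1 →
      Polynomial.eval₂ (Int.castRingHom ℂ) (z : ℂ) ((X : ℤ[X]) ^ n - 1) = 0 := by
    intro z hz
    rw [Polynomial.eval₂_sub, Polynomial.eval₂_pow, Polynomial.eval₂_X, Polynomial.eval₂_one, hz,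
      sub_self]
  -- factorization of laurentEval through phi
  have hfactor : ∀ (z : ℂˣ) (hz : (z : ℂ) ^ n = 1) (f : LaurentPolynomial ℤ),
      laurentEval z f
        = AdjoinRoot.lift (Int.castRingHom ℂ) (z : ℂ) (hz_eval z hz) (phi n hn f) := by
    intro z hz f
    rw [laurentEval_eq_uEval]
    exact uEval_factor (AdjoinRoot.lift (Int.castRingHom ℂ) (z : ℂ) (hz_eval z hz))
      (uroot n hn) z (by rw [uroot_val]; exact AdjoinRoot.lift_root _) f
  set dval : Fin n → ℂ := fun j => laurentEval (zu j) p with hdval_def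
  have hzu_pow : ∀ j : Fin n, ((zu j : ℂ)) ^ n = 1 := fun j => hvpow j
  -- the multiplication map and its matrix
  let fP : S →ₗ[ℤ] S := LinearMap.mulLeft ℤ P
  set A := LinearMap.toMatrix bS bS fP with hA_def
  set D := LinearMap.det fP with hD_def
  have hdet_eq : ((D : ℤ) : ℂ) = ∏ j, dval j := by
    have hA : A.det = D := LinearMap.det_toMatrix _ _
    rw [← hA]
    refine det_cast_eq_prod dval A v hvinj ?_
    intro j k
    set ψj : S →+* ℂ := AdjoinRoot.lift (Int.castRingHom ℂ) ((zu j : ℂ))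
      (hz_eval (zu j) (hzu_pow j)) with hψj_def
    have hψroot : ψj (AdjoinRoot.root _) = v j := AdjoinRoot.lift_root _
    have hψbS : ∀ i : Fin n, ψj (bS i) = v j ^ (i : ℕ) := by
      intro i
      rw [hbS, map_pow, hψroot]
    have hψP : ψj P = dval j := (hfactor (zu j) (hzu_pow j) p).symm
    have hsum : fP (bS k) = ∑ i, A i k • bS i := by
      have h1 : ∀ i, A i k = bS.repr (fP (bS k)) i := fun i => LinearMap.toMatrix_apply _ _ _ _ _
      calc fP (bS k) = ∑ i, bS.repr (fP (bS k)) i • bS i := (bS.sum_repr _).symm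
        _ = ∑ i, A i k • bS i := by
            exact Finset.sum_congr rfl fun i _ => by rw [h1]
    have happly := congrArg ψj hsum
    rw [map_sum] at happly
    have hterm : ∀ i : Fin n, ψj (A i k • bS i) = (Int.castRingHom ℂ) (A i k) * v j ^ (i : ℕ) := by
      intro i
      rw [map_zsmul, hψbS, zsmul_eq_mul]
      rfl
    have hlhs : ψj (fP (bS k)) = dval j * v j ^ (k : ℕ) := by
      have hfPb : fP (bS k) = P * bS k := rfl
      rw [hfPb, map_mul, hψP, hψbS]
    rw [hlhs] at happly
    exact (Finset.sum_congr rfl fun i _ => (hterm i).symm).trans happly.symm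
  -- identification of submodule
  have hrange : (Submodule.restrictScalars ℤ (Ideal.span {P})) = LinearMap.range fP := by
    ext x
    simp only [Submodule.restrictScalars_mem, Ideal.mem_span_singleton, LinearMap.mem_range,
      LinearMap.mulLeft_apply]
    constructor
    · rintro ⟨c, rfl⟩
      exact ⟨c, rfl⟩
    · rintro ⟨y, rfl⟩
      exact ⟨y, rfl⟩
  have hQcard : D ≠ 0 →
      Nat.card (LaurentPolynomial ℤ ⧸ Ideal.span {p, T (n : ℤ) - 1}) = D.natAbs := by
    intro hD0
    rw [Nat.card_congr E.toEquiv]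
    have h1 : Nat.card (S ⧸ Ideal.span {P}) = Nat.card (S ⧸ LinearMap.range fP) := by
      rw [← hrange]
      exact (Nat.card_congr (Submodule.Quotient.restrictScalarsEquiv ℤ
        (Ideal.span {P})).toEquiv).symm
    rw [h1]
    exact natCard_quotient_range_eq_natAbs_det bS fP hD0
  have hD0 : (∀ z : ℂˣ, (z : ℂ) ^ n = 1 → laurentEval z p ≠ 0) → D ≠ 0 := by
    intro hnz hD
    have h1 : ((D : ℤ) : ℂ) = 0 := by rw [hD]; simp
    rw [hdet_eq] at h1
    have h2 : ∀ j : Fin n, dval j ≠ 0 := fun j => hnz (zu j) (hzu_pow j)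
    exact (Finset.prod_ne_zero_iff.mpr fun j _ => h2 j) h1
  have hprod : (∏ j ∈ Finset.range n,
      laurentEval (Units.mk0 (Complex.exp (2 * Real.pi * Complex.I * j / n))
        (Complex.exp_ne_zero _)) p) = ∏ j, dval j := by
    rw [← Fin.prod_univ_eq_prod_range (fun j : ℕ =>
      laurentEval (Units.mk0 (Complex.exp (2 * Real.pi * Complex.I * j / n))
        (Complex.exp_ne_zero _)) p) n]
    exact Finset.prod_congr rfl fun i _ => rfl
  constructor
  · constructor
    · intro hfin
      by_contra hex
      push_neg at hex
      obtain ⟨z, hz1, hz0⟩ := hex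
      have hTn : laurentEval z (T (n : ℤ) - 1) = 0 := by
        rw [map_sub, map_one, laurentEval_eq_uEval, uEval_T]
        rw [zpow_natCast, Units.val_pow_eq_pow_val, hz1, sub_self]
      have hsub : ∀ a ∈ Ideal.span ({p, T (n : ℤ) - 1} : Set (LaurentPolynomial ℤ)),
          (laurentEval z : LaurentPolynomial ℤ →+* ℂ) a = 0 := by
        intro a ha
        have hle : Ideal.span ({p, T (n : ℤ) - 1} : Set (LaurentPolynomial ℤ)) ≤
            RingHom.ker (laurentEval z : LaurentPolynomial ℤ →+* ℂ) := by
          rw [Ideal.span_le]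
          rintro x (rfl | rfl)
          · exact RingHom.mem_ker.mpr hz0
          · exact RingHom.mem_ker.mpr hTn
        exact RingHom.mem_ker.mp (hle ha)
      let g := Ideal.Quotient.lift _ (laurentEval z : LaurentPolynomial ℤ →+* ℂ) hsub
      obtain ⟨m, m', hne, hmm⟩ := Finite.exists_ne_map_eq_of_infinite
        (fun m : ℤ => ((m : LaurentPolynomial ℤ ⧸ Ideal.span {p, T (n : ℤ) - 1})))
      apply hne
      have h1 : g ((m : LaurentPolynomial ℤ ⧸ Ideal.span {p, T (n : ℤ) - 1})) = (m : ℂ) :=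
        map_intCast g m
      have h2 : g ((m' : LaurentPolynomial ℤ ⧸ Ideal.span {p, T (n : ℤ) - 1})) = (m' : ℂ) :=
        map_intCast g m'
      have h3 : (m : ℂ) = (m' : ℂ) := by rw [← h1, ← h2, hmm]
      exact_mod_cast h3
    · intro hnz
      have hD := hD0 hnz
      refine Nat.finite_of_card_ne_zero ?_
      rw [hQcard hD]
      exact Int.natAbs_ne_zero.mpr hD
  · intro hnz
    have hD := hD0 hnz
    rw [hQcard hD, hprod, ← hdet_eq]
    rw [Complex.norm_intCast, Nat.cast_natAbs]
    exact Int.cast_abs
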